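/- Let x ∈ ℝ^m have support N := {i : x_i ≠ 0} and let y = A x + w ∈ ℝ^n with ‖w‖₂ ≤ ε. Let x̂ be any minimizer of ‖β‖₁ over the set {β ∈ ℝ^m : ‖y − Aβ‖₂ ≤ ε}. If some δ < (√2 − 1)/2 is a 2|N|-restricted isometry bound for A, then ‖x − x̂‖₂ ≤ C₁(δ)·ε ≤ 8.79·ε. -/

import Mathlib

open Finset

attribute [local instance] Classical.propDecidable

/-- Euclidean (ℓ2) norm of a finite real vector. -/
noncomputable def norm2 {k : ℕ} (v : Fin k → ℝ) : ℝ := Real.sqrt (∑ i, v i ^ 2)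

/-- ℓ∞ norm (maximum absolute entry) of a finite real vector. -/
noncomputable def normInf {k : ℕ} (v : Fin k → ℝ) : ℝ := ⨆ i, |v i|

/-- Support of a vector, as a finset. -/
noncomputable def spt {k : ℕ} (v : Fin k → ℝ) : Finset (Fin k) :=
  Finset.univ.filter (fun i => v i ≠ 0)

/-- Restriction of a vector to the coordinates indexed by `T` (zero elsewhere). -/
noncomputable def restr {k : ℕ} (T : Finset (Fin k)) (v : Fin k → ℝ) : Fin k → ℝ :=
  fun i => if i ∈ T then v i else 0

/-- `δ ∈ [0,1)` is an `S`-restricted isometry bound for `A`: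
`(1-δ)‖z‖² ≤ ‖Az‖² ≤ (1+δ)‖z‖²` for every `z` with at most `S` nonzero entries. -/
def RIPBound {n m : ℕ} (A : Matrix (Fin n) (Fin m) ℝ) (S : ℕ) (δ : ℝ) : Prop :=
  0 ≤ δ ∧ δ < 1 ∧
    ∀ z : Fin m → ℝ, (spt z).card ≤ S →
      (1 - δ) * (∑ i, z i ^ 2) ≤ (∑ j, (A.mulVec z) j ^ 2) ∧
      (∑ j, (A.mulVec z) j ^ 2) ≤ (1 + δ) * (∑ i, z i ^ 2)

/-- `θ ≥ 0` is an `(S,S')`-restricted orthogonality bound for `A`: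
`|⟨Az, Az'⟩| ≤ θ‖z‖‖z'‖` for all `z, z'` with disjoint supports of cardinalities `≤ S, S'`. -/
def ROBound {n m : ℕ} (A : Matrix (Fin n) (Fin m) ℝ) (S S' : ℕ) (θ : ℝ) : Prop :=
  0 ≤ θ ∧
    ∀ z z' : Fin m → ℝ, Disjoint (spt z) (spt z') →
      (spt z).card ≤ S → (spt z').card ≤ S' →
      |∑ j, (A.mulVec z) j * (A.mulVec z') j| ≤ θ * norm2 z * norm2 z'

/-- A modified-CS estimate with known part `T`: feasible and with minimal ℓ1 norm outside `T`
among all feasible vectors. -/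
def ModCS {n m : ℕ} (A : Matrix (Fin n) (Fin m) ℝ) (y : Fin n → ℝ) (ε : ℝ)
    (T : Finset (Fin m)) (xhat : Fin m → ℝ) : Prop :=
  norm2 (fun j => y j - (A.mulVec xhat) j) ≤ ε ∧
    ∀ β : Fin m → ℝ, norm2 (fun j => y j - (A.mulVec β) j) ≤ ε →
      ∑ i ∈ Tᶜ, |xhat i| ≤ ∑ i ∈ Tᶜ, |β i|

/-- The LS estimate on `T` from `y`: supported on `T` and satisfying the normal equations
`A_Tᵀ (y - A x̂) = 0` (equivalently `x̂_T = (A_Tᵀ A_T)⁻¹ A_Tᵀ y` when `A_T` has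
full column rank). -/
def IsLS {n m : ℕ} (A : Matrix (Fin n) (Fin m) ℝ) (y : Fin n → ℝ)
    (T : Finset (Fin m)) (xhat : Fin m → ℝ) : Prop :=
  (∀ i, i ∉ T → xhat i = 0) ∧
    ∀ i ∈ T, (∑ j, A j i * (y j - (A.mulVec xhat) j)) = 0

/-- `C₁(δ) = 4√(1+δ)/(1-(√2+1)δ)`. -/
noncomputable def C1 (δ : ℝ) : ℝ := 4 * Real.sqrt (1 + δ) / (1 - (Real.sqrt 2 + 1) * δ)

/-- `C₂(δ) = 2(1+(√2-1)δ)/(1-(√2+1)δ)`. -/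
noncomputable def C2 (δ : ℝ) : ℝ := 2 * (1 + (Real.sqrt 2 - 1) * δ) / (1 - (Real.sqrt 2 + 1) * δ)

lemma norm2_nonneg {k : ℕ} (v : Fin k → ℝ) : 0 ≤ norm2 v := Real.sqrt_nonneg _

lemma sq_norm2 {k : ℕ} (v : Fin k → ℝ) : norm2 v ^ 2 = ∑ i, v i ^ 2 :=
  Real.sq_sqrt (Finset.sum_nonneg fun _ _ => sq_nonneg _)

lemma norm2_le_of_sq_le {k : ℕ} {v : Fin k → ℝ} {a : ℝ} (ha : 0 ≤ a)
    (h : ∑ i, v i ^ 2 ≤ a ^ 2) : norm2 v ≤ a := by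
  have := Real.sqrt_le_sqrt h
  rwa [Real.sqrt_sq ha] at this

lemma cs_sum {k : ℕ} (u v : Fin k → ℝ) :
    |∑ i, u i * v i| ≤ norm2 u * norm2 v := by
  have hpos := Real.sum_mul_le_sqrt_mul_sqrt Finset.univ u v
  have hneg := Real.sum_mul_le_sqrt_mul_sqrt Finset.univ (fun i => -u i) v
  have hn : Real.sqrt (∑ i, (-u i) ^ 2) = norm2 u := by
    unfold norm2; congr 1; exact Finset.sum_congr rfl (fun i _ => by ring)
  have hs : ∑ i, -u i * v i = -∑ i, u i * v i := by
    rw [← Finset.sum_neg_distrib]; exact Finset.sum_congr rfl (fun i _ => by ring)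
  rw [abs_le]
  constructor
  · rw [hs, hn] at hneg
    have : norm2 v = Real.sqrt (∑ i, v i ^ 2) := rfl
    linarith [hneg, this ▸ hneg]
  · exact hpos

lemma norm2_add_le {k : ℕ} (u v : Fin k → ℝ) :
    norm2 (fun i => u i + v i) ≤ norm2 u + norm2 v := by
  apply norm2_le_of_sq_le (add_nonneg (norm2_nonneg u) (norm2_nonneg v))
  have hcs : ∑ i, u i * v i ≤ norm2 u * norm2 v := (le_abs_self _).trans (cs_sum u v)
  have h1 := sq_norm2 u
  have h2 := sq_norm2 v
  have hexp : ∑ i, (u i + v i)^2 = (∑ i, u i ^2) + 2 * (∑ i, u i * v i) + ∑ i, v i^2 := by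
    rw [Finset.mul_sum, ← Finset.sum_add_distrib, ← Finset.sum_add_distrib]
    exact Finset.sum_congr rfl fun i _ => by ring
  nlinarith [hcs, h1, h2, hexp]

lemma norm2_neg {k : ℕ} (v : Fin k → ℝ) : norm2 (fun i => -v i) = norm2 v := by
  unfold norm2; congr 1; exact Finset.sum_congr rfl fun i _ => by ring

lemma norm2_sum_le {k : ℕ} {ι : Type*} (s : Finset ι) (f : ι → Fin k → ℝ) :
    norm2 (fun i => ∑ j ∈ s, f j i) ≤ ∑ j ∈ s, norm2 (f j) := by
  classical
  induction s using Finset.induction with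
  | empty => simp [norm2]
  | insert _ _ hx ih =>
    rename_i a s
    calc norm2 (fun i => ∑ j ∈ insert a s, f j i)
        = norm2 (fun i => f a i + ∑ j ∈ s, f j i) := by
          congr 1; funext i; rw [Finset.sum_insert hx]
      _ ≤ norm2 (f a) + norm2 (fun i => ∑ j ∈ s, f j i) := norm2_add_le _ _
      _ ≤ norm2 (f a) + ∑ j ∈ s, norm2 (f j) := by linarith [ih]
      _ = ∑ j ∈ insert a s, norm2 (f j) := by rw [Finset.sum_insert hx]

lemma sum_sq_restr {k : ℕ} (T : Finset (Fin k)) (v : Fin k → ℝ) :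
    ∑ i, restr T v i ^ 2 = ∑ i ∈ T, v i ^ 2 := by
  unfold restr
  rw [← Finset.sum_filter_add_sum_filter_not Finset.univ (· ∈ T)]
  have h1 : ∀ i ∈ Finset.univ.filter (· ∈ T), (if i ∈ T then v i else 0)^2 = v i ^2 := by
    intro i hi; simp at hi; simp [hi]
  have h2 : ∀ i ∈ Finset.univ.filter (¬ · ∈ T), (if i ∈ T then v i else 0)^2 = 0 := by
    intro i hi; simp at hi; simp [hi]
  rw [Finset.sum_congr rfl h1, Finset.sum_congr rfl h2, Finset.sum_const_zero, add_zero]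
  congr 1
  ext i; simp

lemma norm2_restr {k : ℕ} (T : Finset (Fin k)) (v : Fin k → ℝ) :
    norm2 (restr T v) = Real.sqrt (∑ i ∈ T, v i ^ 2) := by
  unfold norm2; rw [sum_sq_restr]

lemma spt_restr_subset {k : ℕ} (T : Finset (Fin k)) (v : Fin k → ℝ) :
    spt (restr T v) ⊆ T := by
  intro i hi
  simp only [spt, Finset.mem_filter] at hi
  by_contra h
  exact hi.2 (by simp [restr, h])

lemma card_spt_restr_le {k : ℕ} (T : Finset (Fin k)) (v : Fin k → ℝ) :
    (spt (restr T v)).card ≤ T.card := Finset.card_le_card (spt_restr_subset T v)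


lemma mulVec_pt {n m : ℕ} (A : Matrix (Fin n) (Fin m) ℝ) (z : Fin m → ℝ) (j : Fin n) :
    A.mulVec z j = ∑ i, A j i * z i := rfl

lemma spt_two_subset {k : ℕ} (z z' : Fin k → ℝ) (c c' : ℝ) :
    spt (fun i => c * z i + c' * z' i) ⊆ spt z ∪ spt z' := by
  intro i hi
  simp only [spt, Finset.mem_filter, Finset.mem_union, Finset.mem_univ, true_and] at hi ⊢
  by_contra hcon
  push_neg at hcon
  simp [hcon.1, hcon.2] at hi

lemma sum_mul_eq_zero_of_disjoint_spt {k : ℕ} {z z' : Fin k → ℝ}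
    (hd : Disjoint (spt z) (spt z')) : ∑ i, z i * z' i = 0 := by
  apply Finset.sum_eq_zero
  intro i _
  by_cases h : z i = 0
  · simp [h]
  · have hi : i ∈ spt z := by simp [spt, h]
    have : i ∉ spt z' := fun h' => (Finset.disjoint_left.mp hd) hi h'
    simp only [spt, Finset.mem_filter, Finset.mem_univ, true_and, not_not] at this
    simp [this]

lemma eq_zero_of_norm2_eq_zero {k : ℕ} {z : Fin k → ℝ} (h : norm2 z = 0) : ∀ i, z i = 0 := by
  intro i
  have hsum : ∑ i, z i ^ 2 = 0 := by
    have := sq_norm2 z; rw [h] at this; simpa using this.symm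
  have := (Finset.sum_eq_zero_iff_of_nonneg (fun i _ => sq_nonneg (z i))).mp hsum i (Finset.mem_univ i)
  exact pow_eq_zero_iff (by norm_num) |>.mp this

lemma rip_ro_one {n m S : ℕ} {A : Matrix (Fin n) (Fin m) ℝ} {δ : ℝ}
    (hRIP : RIPBound A (2*S) δ) (z z' : Fin m → ℝ)
    (hd : Disjoint (spt z) (spt z')) (hz : (spt z).card ≤ S) (hz' : (spt z').card ≤ S) :
    ∑ j, A.mulVec z j * A.mulVec z' j ≤ δ * norm2 z * norm2 z' := by
  set a := norm2 z' with ha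
  set b := norm2 z with hb
  have ha0 : 0 ≤ a := norm2_nonneg _
  have hb0 : 0 ≤ b := norm2_nonneg _
  by_cases haz : a = 0
  · have hz0 : ∀ i, z' i = 0 := eq_zero_of_norm2_eq_zero haz
    have : ∀ j, A.mulVec z' j = 0 := by
      intro j; rw [mulVec_pt]; exact Finset.sum_eq_zero fun i _ => by simp [hz0 i]
    rw [Finset.sum_eq_zero fun j _ => by simp [this j], haz]
    simp
  by_cases hbz : b = 0
  · have hz0 : ∀ i, z i = 0 := eq_zero_of_norm2_eq_zero hbz
    have : ∀ j, A.mulVec z j = 0 := by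
      intro j; rw [mulVec_pt]; exact Finset.sum_eq_zero fun i _ => by simp [hz0 i]
    rw [Finset.sum_eq_zero fun j _ => by simp [this j], hbz]
    simp
  have hapos : 0 < a := lt_of_le_of_ne ha0 (Ne.symm haz)
  have hbpos : 0 < b := lt_of_le_of_ne hb0 (Ne.symm hbz)
  set p : Fin m → ℝ := fun i => a * z i + b * z' i with hp
  set q : Fin m → ℝ := fun i => a * z i + (-b) * z' i with hq
  have hcard_union : (spt z ∪ spt z').card ≤ 2 * S := by
    calc (spt z ∪ spt z').card ≤ (spt z).card + (spt z').card := Finset.card_union_le _ _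
      _ ≤ 2 * S := by omega
  have hcp : (spt p).card ≤ 2 * S :=
    le_trans (Finset.card_le_card (spt_two_subset z z' a b)) hcard_union
  have hcq : (spt q).card ≤ 2 * S :=
    le_trans (Finset.card_le_card (spt_two_subset z z' a (-b))) hcard_union
  have hzz' : ∑ i, z i * z' i = 0 := sum_mul_eq_zero_of_disjoint_spt hd
  have ha2 : ∑ i, z' i ^ 2 = a ^ 2 := (sq_norm2 z').symm
  have hb2 : ∑ i, z i ^ 2 = b ^ 2 := (sq_norm2 z).symm
  have hsump : ∑ i, p i ^ 2 = 2 * (a ^ 2 * b ^ 2) := by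
    have : ∑ i, p i ^ 2 = a^2 * (∑ i, z i ^2) + (2 * a * b) * (∑ i, z i * z' i)
        + b^2 * (∑ i, z' i ^2) := by
      rw [Finset.mul_sum, Finset.mul_sum, Finset.mul_sum, ← Finset.sum_add_distrib,
        ← Finset.sum_add_distrib]
      exact Finset.sum_congr rfl fun i _ => by simp only [hp]; ring
    rw [this, hzz', ha2, hb2]; ring
  have hsumq : ∑ i, q i ^ 2 = 2 * (a ^ 2 * b ^ 2) := by
    have : ∑ i, q i ^ 2 = a^2 * (∑ i, z i ^2) + (-2 * a * b) * (∑ i, z i * z' i)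
        + b^2 * (∑ i, z' i ^2) := by
      rw [Finset.mul_sum, Finset.mul_sum, Finset.mul_sum, ← Finset.sum_add_distrib,
        ← Finset.sum_add_distrib]
      exact Finset.sum_congr rfl fun i _ => by simp only [hq]; ring
    rw [this, hzz', ha2, hb2]; ring
  have hAp : ∀ j, A.mulVec p j = a * A.mulVec z j + b * A.mulVec z' j := by
    intro j
    simp only [mulVec_pt, Finset.mul_sum, ← Finset.sum_add_distrib]
    exact Finset.sum_congr rfl fun i _ => by simp only [hp]; ring
  have hAq : ∀ j, A.mulVec q j = a * A.mulVec z j + (-b) * A.mulVec z' j := by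
    intro j
    simp only [mulVec_pt, Finset.mul_sum, ← Finset.sum_add_distrib]
    exact Finset.sum_congr rfl fun i _ => by simp only [hq]; ring
  have hdiff : ∑ j, (A.mulVec p) j ^ 2 - ∑ j, (A.mulVec q) j ^ 2
      = 4 * a * b * ∑ j, A.mulVec z j * A.mulVec z' j := by
    rw [Finset.mul_sum, ← Finset.sum_sub_distrib]
    exact Finset.sum_congr rfl fun j _ => by rw [hAp j, hAq j]; ring
  have hup := (hRIP.2.2 p hcp).2
  have hlow := (hRIP.2.2 q hcq).1
  rw [hsump] at hup
  rw [hsumq] at hlow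
  have hkey : 4 * a * b * ∑ j, A.mulVec z j * A.mulVec z' j ≤ 4 * δ * (a^2 * b^2) := by
    rw [← hdiff]; linarith
  have hab : 0 < a * b := mul_pos hapos hbpos
  nlinarith [hkey, hab]

lemma spt_neg {k : ℕ} (z : Fin k → ℝ) : spt (fun i => -z i) = spt z := by
  ext i; simp [spt]

lemma rip_ro {n m S : ℕ} {A : Matrix (Fin n) (Fin m) ℝ} {δ : ℝ}
    (hRIP : RIPBound A (2*S) δ) (z z' : Fin m → ℝ)
    (hd : Disjoint (spt z) (spt z')) (hz : (spt z).card ≤ S) (hz' : (spt z').card ≤ S) :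
    |∑ j, A.mulVec z j * A.mulVec z' j| ≤ δ * norm2 z * norm2 z' := by
  rw [abs_le]
  refine ⟨?_, rip_ro_one hRIP z z' hd hz hz'⟩
  have hneg := rip_ro_one hRIP z (fun i => -z' i)
    (by rw [spt_neg]; exact hd) hz (by rw [spt_neg]; exact hz')
  have hA : ∀ j, A.mulVec (fun i => -z' i) j = -(A.mulVec z' j) := by
    intro j
    simp only [mulVec_pt, ← Finset.sum_neg_distrib]
    exact Finset.sum_congr rfl fun i _ => by ring
  have hsum : ∑ j, A.mulVec z j * A.mulVec (fun i => -z' i) j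
      = -∑ j, A.mulVec z j * A.mulVec z' j := by
    rw [← Finset.sum_neg_distrib]
    exact Finset.sum_congr rfl fun j _ => by rw [hA j]; ring
  rw [hsum, norm2_neg] at hneg
  linarith

/-- The `j`-th block (size `S`) of a list. -/
noncomputable def Bf {α : Type*} [DecidableEq α] (l : List α) (S j : ℕ) : Finset α :=
  ((l.drop (j*S)).take S).toFinset

lemma memBf_iff {α : Type*} [DecidableEq α] (l : List α) (S j : ℕ) (a : α) :
    a ∈ Bf l S j ↔ ∃ p, ∃ hp : p < l.length, j*S ≤ p ∧ p < j*S + S ∧ l[p] = a := by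
  rw [Bf, List.mem_toFinset, List.mem_iff_getElem]
  constructor
  · rintro ⟨q, hq, rfl⟩
    have hq' : q < min S (l.length - j*S) := by
      simpa [List.length_take, List.length_drop] using hq
    refine ⟨j*S + q, by omega, by omega, by omega, ?_⟩
    rw [List.getElem_take, List.getElem_drop]
  · rintro ⟨p, hp, h1, h2, rfl⟩
    refine ⟨p - j*S, ?_, ?_⟩
    · simp only [List.length_take, List.length_drop]; omega
    · rw [List.getElem_take, List.getElem_drop]; congr 1; omega

lemma cardBf_le {α : Type*} [DecidableEq α] (l : List α) (S j : ℕ) :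
    (Bf l S j).card ≤ S := by
  calc (Bf l S j).card ≤ ((l.drop (j*S)).take S).length := List.toFinset_card_le _
    _ ≤ S := List.length_take_le _ _

lemma Bf_subset {α : Type*} [DecidableEq α] (l : List α) (S j : ℕ) :
    Bf l S j ⊆ l.toFinset := by
  intro a ha
  rw [memBf_iff] at ha
  obtain ⟨p, hp, _, _, rfl⟩ := ha
  rw [List.mem_toFinset]
  exact List.getElem_mem hp

lemma disjointBf {α : Type*} [DecidableEq α] {l : List α} (hnd : l.Nodup) (S : ℕ)
    {i j : ℕ} (hij : i < j) : Disjoint (Bf l S i) (Bf l S j) := by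
  rw [Finset.disjoint_left]
  intro a hai haj
  rw [memBf_iff] at hai haj
  obtain ⟨p, hp, h1, h2, hpa⟩ := hai
  obtain ⟨p', hp', h1', h2', hpa'⟩ := haj
  have hmul : (i+1) * S ≤ j * S := Nat.mul_le_mul_right S (by omega)
  have hne : p ≠ p' := by
    have : (i+1)*S = i*S + S := by ring
    omega
  exact hne ((List.Nodup.getElem_inj_iff hnd).mp (hpa.trans hpa'.symm))

lemma coverBf {α : Type*} [DecidableEq α] (l : List α) (S : ℕ) (hS : 1 ≤ S) (a : α)
    (ha : a ∈ l) : ∃ j < l.length, a ∈ Bf l S j := by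
  rw [List.mem_iff_getElem] at ha
  obtain ⟨p, hp, rfl⟩ := ha
  refine ⟨p / S, lt_of_le_of_lt (Nat.div_le_self p S) hp, ?_⟩
  rw [memBf_iff]
  have h1 := Nat.div_add_mod p S
  have h2 := Nat.mod_lt p (show 0 < S by omega)
  have h3 : p / S * S = S * (p / S) := Nat.mul_comm _ _
  exact ⟨p, hp, by omega, by omega, rfl⟩

lemma sortedBf {α : Type*} [DecidableEq α] {l : List α} {r : α → α → Prop}
    (hsort : List.Pairwise r l) (S : ℕ) {i j : ℕ} (hij : i < j) {a b : α}
    (hbi : b ∈ Bf l S i) (haj : a ∈ Bf l S j) : r b a := by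
  rw [memBf_iff] at hbi haj
  obtain ⟨p, hp, h1, h2, rfl⟩ := hbi
  obtain ⟨p', hp', h1', h2', rfl⟩ := haj
  have hmul : (i+1) * S ≤ j * S := Nat.mul_le_mul_right S (by omega)
  have hlt : p < p' := by
    have : (i+1)*S = i*S + S := by ring
    omega
  exact List.pairwise_iff_getElem.mp hsort p p' hp hp' hlt

lemma blockBf_bound {k : ℕ} (h : Fin k → ℝ) (l : List (Fin k)) (hnd : l.Nodup)
    (hsort : List.Pairwise (fun a b => |h b| ≤ |h a|) l) (S : ℕ) (hS : 1 ≤ S) (j : ℕ) :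
    Real.sqrt (∑ i ∈ Bf l S (j+1), h i ^ 2)
      ≤ (∑ i ∈ Bf l S j, |h i|) / Real.sqrt S := by
  have habs : 0 ≤ ∑ i ∈ Bf l S j, |h i| := Finset.sum_nonneg fun i _ => abs_nonneg _
  rcases Finset.eq_empty_or_nonempty (Bf l S (j+1)) with he | ⟨a, ha⟩
  · rw [he]
    simp only [Finset.sum_empty, Real.sqrt_zero]
    exact div_nonneg habs (Real.sqrt_nonneg _)
  -- block j is full
  have hlen : j * S + S ≤ l.length := by
    obtain ⟨p, hp, h1, _, _⟩ := (memBf_iff l S (j+1) a).mp ha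
    have : (j+1)*S = j*S + S := by ring
    omega
  have hcardj : (Bf l S j).card = S := by
    have hsub : ((l.drop (j*S)).take S).Sublist l :=
      ((l.drop (j*S)).take_sublist S).trans (l.drop_sublist (j*S))
    rw [Bf, List.toFinset_card_of_nodup (hsub.nodup hnd), List.length_take,
      List.length_drop]
    omega
  set M : ℝ := (∑ i ∈ Bf l S j, |h i|) / S with hM
  have hM0 : 0 ≤ M := div_nonneg habs (by positivity)
  have hMb : ∀ i ∈ Bf l S (j+1), |h i| ≤ M := by
    intro i hi
    have hall : ∀ b ∈ Bf l S j, |h i| ≤ |h b| := fun b hb =>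
      sortedBf hsort S (Nat.lt_succ_self j) hb hi
    have hsum : (S : ℝ) * |h i| ≤ ∑ b ∈ Bf l S j, |h b| := by
      calc (S : ℝ) * |h i| = ∑ _b ∈ Bf l S j, |h i| := by
            rw [Finset.sum_const, hcardj, nsmul_eq_mul]
        _ ≤ ∑ b ∈ Bf l S j, |h b| := Finset.sum_le_sum hall
    rw [hM, le_div_iff₀ (by positivity : (0:ℝ) < S)]
    linarith
  have hsq : ∑ i ∈ Bf l S (j+1), h i ^ 2 ≤ (S : ℝ) * M ^ 2 := by
    calc ∑ i ∈ Bf l S (j+1), h i ^ 2 ≤ ∑ _i ∈ Bf l S (j+1), M ^ 2 := by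
          refine Finset.sum_le_sum fun i hi => ?_
          rw [← sq_abs]
          exact pow_le_pow_left₀ (abs_nonneg _) (hMb i hi) 2
      _ = (Bf l S (j+1)).card * M ^ 2 := by rw [Finset.sum_const, nsmul_eq_mul]
      _ ≤ (S : ℝ) * M ^ 2 := by
          have := cardBf_le l S (j+1)
          have : ((Bf l S (j+1)).card : ℝ) ≤ (S : ℝ) := by exact_mod_cast this
          nlinarith [sq_nonneg M]
  have hSpos : (0:ℝ) < S := by positivity
  calc Real.sqrt (∑ i ∈ Bf l S (j+1), h i ^ 2) ≤ Real.sqrt ((S : ℝ) * M ^ 2) :=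
        Real.sqrt_le_sqrt hsq
    _ = Real.sqrt S * M := by
        rw [Real.sqrt_mul (le_of_lt hSpos), Real.sqrt_sq hM0]
    _ = (∑ i ∈ Bf l S j, |h i|) / Real.sqrt S := by
        rw [hM]
        rw [eq_div_iff (by positivity : Real.sqrt S ≠ 0)]
        have hss : Real.sqrt S * Real.sqrt S = (S:ℝ) := Real.mul_self_sqrt (le_of_lt hSpos)
        field_simp
        nlinarith [hss]


lemma sqrt2_lt : Real.sqrt 2 < 1.41422 := by
  rw [show (1.41422:ℝ) = Real.sqrt (1.41422^2) from (Real.sqrt_sq (by norm_num)).symm]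
  exact Real.sqrt_lt_sqrt (by norm_num) (by norm_num)

lemma lt_sqrt2 : 1.41421 < Real.sqrt 2 := by
  rw [show (1.41421:ℝ) = Real.sqrt (1.41421^2) from (Real.sqrt_sq (by norm_num)).symm]
  exact Real.sqrt_lt_sqrt (by norm_num) (by norm_num)

lemma denom_pos {δ : ℝ} (hδ0 : 0 ≤ δ) (hδ : δ < (Real.sqrt 2 - 1) / 2) :
    1/2 < 1 - (Real.sqrt 2 + 1) * δ := by
  have hs : Real.sqrt 2 ^ 2 = 2 := Real.sq_sqrt (by norm_num)
  have hpos : 0 < Real.sqrt 2 + 1 := by nlinarith [lt_sqrt2]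
  have h1 := mul_lt_mul_of_pos_left hδ hpos
  nlinarith [hs, h1]

lemma C1_nonneg {δ : ℝ} (hδ0 : 0 ≤ δ) (hδ : δ < (Real.sqrt 2 - 1) / 2) : 0 ≤ C1 δ := by
  have hd := denom_pos hδ0 hδ
  exact div_nonneg (by positivity) (by linarith)

lemma C1_le {δ : ℝ} (hδ0 : 0 ≤ δ) (hδ : δ < (Real.sqrt 2 - 1) / 2) : C1 δ ≤ 8.79 := by
  have hd := denom_pos hδ0 hδ
  have hs : Real.sqrt 2 ^ 2 = 2 := Real.sq_sqrt (by norm_num)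
  have h16 : 16 * (1 + δ) ≤ (8.79 * (1 - (Real.sqrt 2 + 1) * δ)) ^ 2 := by
    nlinarith [hs, lt_sqrt2, sqrt2_lt, sq_nonneg (2*δ - (Real.sqrt 2 - 1)), hδ0, hδ]
  have hnum : 4 * Real.sqrt (1 + δ) ≤ 8.79 * (1 - (Real.sqrt 2 + 1) * δ) := by
    have h4 : (4 * Real.sqrt (1 + δ)) ^ 2 = 16 * (1 + δ) := by
      rw [mul_pow, Real.sq_sqrt (by linarith)]; ring
    have hL : 0 ≤ 4 * Real.sqrt (1 + δ) := by positivity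
    have hR : 0 ≤ 8.79 * (1 - (Real.sqrt 2 + 1) * δ) := by nlinarith
    nlinarith [h4, h16, hL, hR, sq_nonneg (4 * Real.sqrt (1+δ) - 8.79 * (1 - (Real.sqrt 2 + 1) * δ))]
  rw [C1, div_le_iff₀ (by linarith)]
  linarith

set_option maxHeartbeats 2000000 in
/-- CS (basis pursuit) error bound (Corollary 2). The ℓ1 minimizer over the
feasible set is exactly a modified-CS estimate with known part `∅`. -/
theorem cs_error_bound {n m : ℕ} (A : Matrix (Fin n) (Fin m) ℝ)
    (x : Fin m → ℝ) (w : Fin n → ℝ) (ε δ : ℝ)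
    (hw : norm2 w ≤ ε)
    (hδ : δ < (Real.sqrt 2 - 1) / 2)
    (hRIP : RIPBound A (2 * (spt x).card) δ)
    (xhat : Fin m → ℝ)
    (hxhat : ModCS A (fun j => (A.mulVec x) j + w j) ε (∅ : Finset (Fin m)) xhat) :
    norm2 (fun i => x i - xhat i) ≤ C1 δ * ε ∧ C1 δ * ε ≤ 8.79 * ε := by
  have hδ0 : 0 ≤ δ := hRIP.1
  have hε0 : 0 ≤ ε := le_trans (norm2_nonneg w) hw
  have hC1ε : 0 ≤ C1 δ * ε := mul_nonneg (C1_nonneg hδ0 hδ) hε0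
  refine ⟨?_, mul_le_mul_of_nonneg_right (C1_le hδ0 hδ) hε0⟩
  set T0 := spt x with hT0
  set S := T0.card with hSdef
  set h : Fin m → ℝ := fun i => x i - xhat i with hh
  -- cone constraint
  have hl1 : ∑ i, |xhat i| ≤ ∑ i, |x i| := by
    have hfx : norm2 (fun j => ((A.mulVec x) j + w j) - (A.mulVec x) j) ≤ ε := by
      have : (fun j => ((A.mulVec x) j + w j) - (A.mulVec x) j) = w :=
        funext fun j => by ring
      rw [this]; exact hw
    have := hxhat.2 x hfx
    simpa using this
  have hxz : ∀ i ∈ T0ᶜ, x i = 0 := by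
    intro i hi
    simp only [hT0, spt, Finset.mem_compl, Finset.mem_filter, Finset.mem_univ, true_and,
      not_not] at hi
    exact hi
  have hcone : ∑ i ∈ T0ᶜ, |h i| ≤ ∑ i ∈ T0, |h i| := by
    have e1 : ∑ i ∈ T0, |xhat i| + ∑ i ∈ T0ᶜ, |xhat i| = ∑ i, |xhat i| :=
      Finset.sum_add_sum_compl T0 _
    have e2 : ∑ i ∈ T0, |x i| + ∑ i ∈ T0ᶜ, |x i| = ∑ i, |x i| :=
      Finset.sum_add_sum_compl T0 _
    have e3 : ∑ i ∈ T0ᶜ, |x i| = 0 :=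
      Finset.sum_eq_zero fun i hi => by rw [hxz i hi]; simp
    have e4 : ∑ i ∈ T0ᶜ, |xhat i| = ∑ i ∈ T0ᶜ, |h i| :=
      Finset.sum_congr rfl fun i hi => by rw [hh]; simp only []; rw [hxz i hi]; simp
    have e5 : ∑ i ∈ T0, |x i| - ∑ i ∈ T0, |h i| ≤ ∑ i ∈ T0, |xhat i| := by
      rw [← Finset.sum_sub_distrib]
      refine Finset.sum_le_sum fun i _ => ?_
      have : xhat i = x i - h i := by rw [hh]; ring
      rw [this]
      exact abs_sub_abs_le_abs_sub _ _
    linarith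
  -- trivial case S = 0
  by_cases hS0 : S = 0
  · have hT0e : T0 = ∅ := Finset.card_eq_zero.mp (by rw [← hSdef]; exact hS0)
    have : ∑ i, |h i| ≤ 0 := by
      have := hcone
      rw [hT0e] at this
      simpa using this
    have hz : ∀ i, h i = 0 := by
      intro i
      have hnn : ∀ i ∈ Finset.univ, (0:ℝ) ≤ |h i| := fun i _ => abs_nonneg _
      have := (Finset.sum_eq_zero_iff_of_nonneg hnn).mp (le_antisymm this (Finset.sum_nonneg hnn))
      exact abs_eq_zero.mp (this i (Finset.mem_univ i))
    have : norm2 h = 0 := by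
      unfold norm2
      rw [Finset.sum_eq_zero fun i _ => by rw [hz i]; ring]
      exact Real.sqrt_zero
    rw [this]; exact hC1ε
  have hS : 1 ≤ S := Nat.one_le_iff_ne_zero.mpr hS0
  -- ‖Ah‖ ≤ 2ε
  have hAh : norm2 (A.mulVec h) ≤ 2 * ε := by
    have hfeas := hxhat.1
    have hid : A.mulVec h = fun j => (((A.mulVec x) j + w j) - (A.mulVec xhat) j) + (- w j) := by
      funext j
      simp only [mulVec_pt, hh, mul_sub, Finset.sum_sub_distrib]
      ring
    rw [hid]
    calc norm2 (fun j => (((A.mulVec x) j + w j) - (A.mulVec xhat) j) + (- w j))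
        ≤ norm2 (fun j => ((A.mulVec x) j + w j) - (A.mulVec xhat) j)
          + norm2 (fun j => - w j) := norm2_add_le _ _
      _ ≤ ε + ε := by
          rw [norm2_neg]
          exact add_le_add hfeas hw
      _ = 2 * ε := by ring
  -- sorted list of T0ᶜ by decreasing |h|
  set le : Fin m → Fin m → Bool := fun a b => decide (|h b| ≤ |h a|) with hle
  set l : List (Fin m) := T0ᶜ.toList.mergeSort le with hldef
  have hperm : l.Perm T0ᶜ.toList := List.mergeSort_perm T0ᶜ.toList le
  have hnd : l.Nodup := hperm.nodup_iff.mpr (Finset.nodup_toList _)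
  have hmem : ∀ a, a ∈ l ↔ a ∈ T0ᶜ := fun a => by rw [hperm.mem_iff, Finset.mem_toList]
  have hlT : l.toFinset = T0ᶜ := Finset.ext fun a => by rw [List.mem_toFinset]; exact hmem a
  have hsort : List.Pairwise (fun a b : Fin m => |h b| ≤ |h a|) l := by
    have htr : ∀ a b c : Fin m, le a b = true → le b c = true → le a c = true := by
      intro a b c hab hbc
      simp only [hle, decide_eq_true_eq] at *
      linarith
    have hto : ∀ a b : Fin m, (le a b || le b a) = true := by
      intro a b
      simp only [hle, Bool.or_eq_true, decide_eq_true_eq]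
      exact le_total _ _
    have := List.pairwise_mergeSort htr hto T0ᶜ.toList
    exact this.imp fun hab => by simpa [hle] using hab
  set K := l.length with hK
  -- the pieces
  set h01 : Fin m → ℝ := restr (T0 ∪ Bf l S 0) h with h01def
  set hT : Fin m → ℝ := restr T0 h with hTdef
  set h0 : Fin m → ℝ := restr (Bf l S 0) h with h0def
  set g : ℕ → Fin m → ℝ := fun j => restr (Bf l S j) h with gdef
  have hBsub : ∀ j, Bf l S j ⊆ T0ᶜ := fun j => hlT ▸ Bf_subset l S j
  have hdisjT : ∀ j, Disjoint T0 (Bf l S j) :=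
    fun j => Finset.disjoint_of_subset_right (hBsub j) disjoint_compl_right
  -- decomposition of h
  have hdecomp : ∀ i, h i = h01 i + ∑ j ∈ Finset.Ico 1 K, g j i := by
    intro i
    by_cases hiT : i ∈ T0
    · have h1 : h01 i = h i := by
        simp only [h01def, restr, Finset.mem_union, hiT, true_or, if_true]
      have h2 : ∀ j ∈ Finset.Ico 1 K, g j i = 0 := by
        intro j _
        have : i ∉ Bf l S j := fun hc => (Finset.disjoint_left.mp (hdisjT j)) hiT hc
        simp only [gdef, restr, this, if_false]
      rw [h1, Finset.sum_eq_zero h2, add_zero]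
    · have hic : i ∈ T0ᶜ := Finset.mem_compl.mpr hiT
      obtain ⟨j0, hj0K, hij0⟩ := coverBf l S hS i ((hmem i).mpr hic)
      by_cases hj00 : j0 = 0
      · subst hj00
        have h1 : h01 i = h i := by
          simp only [h01def, restr, Finset.mem_union, hij0, or_true, if_true]
        have h2 : ∀ j ∈ Finset.Ico 1 K, g j i = 0 := by
          intro j hj
          have hj1 : 1 ≤ j := (Finset.mem_Ico.mp hj).1
          have : i ∉ Bf l S j :=
            fun hc => (Finset.disjoint_left.mp (disjointBf hnd S (by omega))) hij0 hc
          simp only [gdef, restr, this, if_false]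
        rw [h1, Finset.sum_eq_zero h2, add_zero]
      · have hj01 : 1 ≤ j0 := Nat.one_le_iff_ne_zero.mpr hj00
        have h1 : h01 i = 0 := by
          have hiB0 : i ∉ Bf l S 0 :=
            fun hc => (Finset.disjoint_left.mp (disjointBf hnd S (by omega))) hc hij0
          simp only [h01def, restr, Finset.mem_union]
          rw [if_neg (by tauto)]
        have h2 : ∑ j ∈ Finset.Ico 1 K, g j i = h i := by
          rw [Finset.sum_eq_single_of_mem j0 (Finset.mem_Ico.mpr ⟨hj01, hj0K⟩)]
          · simp only [gdef, restr, hij0, if_true]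
          · intro j hj hne
            have : i ∉ Bf l S j := by
              intro hc
              rcases Nat.lt_or_ge j j0 with hlt | hge
              · exact (Finset.disjoint_left.mp (disjointBf hnd S hlt)) hc hij0
              · exact (Finset.disjoint_left.mp (disjointBf hnd S (by omega))) hij0 hc
            simp only [gdef, restr, this, if_false]
        rw [h1, h2, zero_add]
  -- quantities
  set N := norm2 h01 with hN
  set a := norm2 hT with ha
  set b := norm2 h0 with hb
  set ρ := ∑ j ∈ Finset.Ico 1 K, norm2 (g j) with hρ
  have hN0 : 0 ≤ N := norm2_nonneg _
  have ha0 : 0 ≤ a := norm2_nonneg _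
  have hb0 : 0 ≤ b := norm2_nonneg _
  have hρ0 : 0 ≤ ρ := Finset.sum_nonneg fun j _ => norm2_nonneg _
  -- splitting h01 = hT + h0
  have hsplit : ∀ i, h01 i = hT i + h0 i := by
    intro i
    simp only [h01def, hTdef, h0def, restr, Finset.mem_union]
    by_cases hiT : i ∈ T0
    · have : i ∉ Bf l S 0 := fun hc => (Finset.disjoint_left.mp (hdisjT 0)) hiT hc
      simp [hiT, this]
    · by_cases hiB : i ∈ Bf l S 0 <;> simp [hiT, hiB]
  -- norms relations
  have hNsq : N ^ 2 = a ^ 2 + b ^ 2 := by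
    rw [hN, ha, hb, h01def, hTdef, h0def, sq_norm2, sq_norm2, sq_norm2,
      sum_sq_restr, sum_sq_restr, sum_sq_restr, Finset.sum_union (hdisjT 0)]
  have haN : a ≤ N := by nlinarith [hNsq, ha0, hb0, hN0, sq_nonneg b]
  have habN : a + b ≤ Real.sqrt 2 * N := by
    have h2 : (a + b) ^ 2 ≤ (Real.sqrt 2 * N) ^ 2 := by
      have hs2 : Real.sqrt 2 ^ 2 = 2 := Real.sq_sqrt (by norm_num)
      nlinarith [sq_nonneg (a - b), hNsq]
    have hrn : 0 ≤ Real.sqrt 2 * N := mul_nonneg (Real.sqrt_nonneg _) hN0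
    nlinarith [h2, hrn, ha0, hb0]
  -- ρ ≤ a
  have hρa : ρ ≤ a := by
    have hsqS : 0 < Real.sqrt S := Real.sqrt_pos.mpr (Nat.cast_pos.mpr (by omega))
    have step1 : ρ ≤ ∑ j ∈ Finset.Ico 1 K, (∑ i ∈ Bf l S (j-1), |h i|) / Real.sqrt S := by
      refine Finset.sum_le_sum fun j hj => ?_
      have hj1 : 1 ≤ j := (Finset.mem_Ico.mp hj).1
      have : norm2 (g j) = Real.sqrt (∑ i ∈ Bf l S j, h i ^ 2) := by
        rw [gdef]; exact norm2_restr _ _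
      rw [this]
      have := blockBf_bound h l hnd hsort S hS (j-1)
      rwa [Nat.sub_add_cancel hj1] at this
    have step2 : ∑ j ∈ Finset.Ico 1 K, (∑ i ∈ Bf l S (j-1), |h i|) / Real.sqrt S
        = (∑ j ∈ Finset.range (K-1), ∑ i ∈ Bf l S j, |h i|) / Real.sqrt S := by
      rw [Finset.sum_div, Finset.sum_Ico_eq_sum_range]
      exact Finset.sum_congr rfl fun j _ => by norm_num
    have step3 : ∑ j ∈ Finset.range (K-1), ∑ i ∈ Bf l S j, |h i| ≤ ∑ i ∈ T0ᶜ, |h i| := by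
      rw [← Finset.sum_biUnion]
      · refine Finset.sum_le_sum_of_subset_of_nonneg ?_ (fun i _ _ => abs_nonneg _)
        intro i hi
        obtain ⟨j, _, hij⟩ := Finset.mem_biUnion.mp hi
        exact hBsub j hij
      · intro p hp q hq hpq
        rcases Nat.lt_or_ge p q with hlt | hge
        · exact disjointBf hnd S hlt
        · exact (disjointBf hnd S (by omega)).symm
    have step4 : ∑ i ∈ T0, |h i| ≤ Real.sqrt S * a := by
      have hcs : (∑ i ∈ T0, |h i|) ^ 2 ≤ (S : ℝ) * ∑ i ∈ T0, |h i| ^ 2 := by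
        have := sq_sum_le_card_mul_sum_sq (s := T0) (f := fun i => |h i|)
        rw [← hSdef] at this
        exact_mod_cast this
      have ha2 : a ^ 2 = ∑ i ∈ T0, h i ^ 2 := by
        rw [ha, hTdef, sq_norm2, sum_sq_restr]
      have habs2 : ∑ i ∈ T0, |h i| ^ 2 = ∑ i ∈ T0, h i ^ 2 :=
        Finset.sum_congr rfl fun i _ => sq_abs _
      have hnn : 0 ≤ ∑ i ∈ T0, |h i| := Finset.sum_nonneg fun i _ => abs_nonneg _
      have hrs : 0 ≤ Real.sqrt S * a := mul_nonneg (Real.sqrt_nonneg _) ha0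
      have hS2 : Real.sqrt S ^ 2 = (S:ℝ) := Real.sq_sqrt (Nat.cast_nonneg _)
      nlinarith [hcs, ha2, habs2, hnn, hrs, hS2]
    calc ρ ≤ (∑ j ∈ Finset.range (K-1), ∑ i ∈ Bf l S j, |h i|) / Real.sqrt S := by
          rw [← step2]; exact step1
      _ ≤ (Real.sqrt S * a) / Real.sqrt S := by
          rw [div_le_div_iff_of_pos_right hsqS]
          exact le_trans step3 (le_trans hcone step4)
      _ = a := by field_simp
  -- inner product identities
  have hAsplit : ∀ t, A.mulVec h01 t = A.mulVec hT t + A.mulVec h0 t := by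
    intro t
    simp only [mulVec_pt, ← Finset.sum_add_distrib]
    exact Finset.sum_congr rfl fun i _ => by rw [hsplit i]; ring
  have hAdecomp : ∀ t, A.mulVec h t
      = A.mulVec h01 t + ∑ j ∈ Finset.Ico 1 K, A.mulVec (g j) t := by
    intro t
    simp only [mulVec_pt]
    calc ∑ i, A t i * h i
        = ∑ i, (A t i * h01 i + ∑ j ∈ Finset.Ico 1 K, A t i * g j i) :=
          Finset.sum_congr rfl fun i _ => by rw [hdecomp i, mul_add, Finset.mul_sum]
      _ = (∑ i, A t i * h01 i) + ∑ i, ∑ j ∈ Finset.Ico 1 K, A t i * g j i :=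
          Finset.sum_add_distrib
      _ = (∑ i, A t i * h01 i) + ∑ j ∈ Finset.Ico 1 K, ∑ i, A t i * g j i := by
          rw [Finset.sum_comm]
  have hinner : ∑ t, (A.mulVec h01 t)^2
      = (∑ t, A.mulVec h01 t * A.mulVec h t)
        - ∑ j ∈ Finset.Ico 1 K, ∑ t, A.mulVec h01 t * A.mulVec (g j) t := by
    have e1 : ∑ t, A.mulVec h01 t * A.mulVec h t
        = (∑ t, (A.mulVec h01 t)^2)
          + ∑ j ∈ Finset.Ico 1 K, ∑ t, A.mulVec h01 t * A.mulVec (g j) t := by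
      calc ∑ t, A.mulVec h01 t * A.mulVec h t
          = ∑ t, ((A.mulVec h01 t)^2
              + ∑ j ∈ Finset.Ico 1 K, A.mulVec h01 t * A.mulVec (g j) t) :=
            Finset.sum_congr rfl fun t _ => by
              rw [hAdecomp t, mul_add, Finset.mul_sum, sq]
        _ = (∑ t, (A.mulVec h01 t)^2)
              + ∑ t, ∑ j ∈ Finset.Ico 1 K, A.mulVec h01 t * A.mulVec (g j) t :=
            Finset.sum_add_distrib
        _ = _ := by rw [Finset.sum_comm]
    linarith
  -- RIP bounds for h01
  have hcard01 : (spt h01).card ≤ 2 * S := by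
    calc (spt h01).card ≤ (T0 ∪ Bf l S 0).card := by
          rw [h01def]; exact card_spt_restr_le _ _
      _ ≤ T0.card + (Bf l S 0).card := Finset.card_union_le _ _
      _ ≤ S + S := add_le_add (le_of_eq hSdef.symm) (cardBf_le l S 0)
      _ = 2 * S := by ring
  have hsum01 : ∑ i, h01 i ^ 2 = N ^ 2 := (sq_norm2 h01).symm
  have hlow : (1-δ) * N^2 ≤ ∑ t, (A.mulVec h01 t)^2 := by
    rw [← hsum01]; exact (hRIP.2.2 h01 hcard01).1
  have hup : ∑ t, (A.mulVec h01 t)^2 ≤ (1+δ) * N^2 := by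
    rw [← hsum01]; exact (hRIP.2.2 h01 hcard01).2
  -- Cauchy-Schwarz bound
  have hAh01norm : norm2 (A.mulVec h01) ≤ Real.sqrt (1+δ) * N := by
    apply norm2_le_of_sq_le (mul_nonneg (Real.sqrt_nonneg _) hN0)
    rw [mul_pow, Real.sq_sqrt (by linarith : (0:ℝ) ≤ 1+δ)]
    exact hup
  have hCS : ∑ t, A.mulVec h01 t * A.mulVec h t ≤ Real.sqrt (1+δ) * N * (2*ε) := by
    calc ∑ t, A.mulVec h01 t * A.mulVec h t
        ≤ |∑ t, A.mulVec h01 t * A.mulVec h t| := le_abs_self _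
      _ ≤ norm2 (A.mulVec h01) * norm2 (A.mulVec h) := cs_sum _ _
      _ ≤ (Real.sqrt (1+δ) * N) * (2*ε) := by
          apply mul_le_mul hAh01norm hAh (norm2_nonneg _)
          exact mul_nonneg (Real.sqrt_nonneg _) hN0
  -- restricted orthogonality bounds
  have hRO : ∀ j ∈ Finset.Ico 1 K,
      |∑ t, A.mulVec h01 t * A.mulVec (g j) t| ≤ δ * (a + b) * norm2 (g j) := by
    intro j hj
    have hj1 : 1 ≤ j := (Finset.mem_Ico.mp hj).1
    have hsptg : spt (g j) ⊆ Bf l S j := by rw [gdef]; exact spt_restr_subset _ _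
    have hcardg : (spt (g j)).card ≤ S :=
      le_trans (Finset.card_le_card hsptg) (cardBf_le l S j)
    have hsptT : spt hT ⊆ T0 := by rw [hTdef]; exact spt_restr_subset _ _
    have hspt0 : spt h0 ⊆ Bf l S 0 := by rw [h0def]; exact spt_restr_subset _ _
    have r1 := rip_ro (S := S) hRIP hT (g j)
      ((hdisjT j).mono hsptT hsptg)
      (le_trans (Finset.card_le_card hsptT) (le_of_eq hSdef.symm)) hcardg
    have r2 := rip_ro (S := S) hRIP h0 (g j)
      ((disjointBf hnd S (by omega : 0 < j)).mono hspt0 hsptg)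
      (le_trans (Finset.card_le_card hspt0) (cardBf_le l S 0)) hcardg
    have e : ∑ t, A.mulVec h01 t * A.mulVec (g j) t
        = (∑ t, A.mulVec hT t * A.mulVec (g j) t)
          + ∑ t, A.mulVec h0 t * A.mulVec (g j) t := by
      rw [← Finset.sum_add_distrib]
      exact Finset.sum_congr rfl fun t _ => by rw [hAsplit t]; ring
    calc |∑ t, A.mulVec h01 t * A.mulVec (g j) t|
        ≤ |∑ t, A.mulVec hT t * A.mulVec (g j) t|
          + |∑ t, A.mulVec h0 t * A.mulVec (g j) t| := by rw [e]; exact abs_add_le _ _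
      _ ≤ δ * a * norm2 (g j) + δ * b * norm2 (g j) := by
          rw [← ha, ← hb] at *
          exact add_le_add r1 r2
      _ = δ * (a + b) * norm2 (g j) := by ring
  have hROsum : |∑ j ∈ Finset.Ico 1 K, ∑ t, A.mulVec h01 t * A.mulVec (g j) t|
      ≤ δ * (a + b) * ρ := by
    calc |∑ j ∈ Finset.Ico 1 K, ∑ t, A.mulVec h01 t * A.mulVec (g j) t|
        ≤ ∑ j ∈ Finset.Ico 1 K, |∑ t, A.mulVec h01 t * A.mulVec (g j) t| :=
          Finset.abs_sum_le_sum_abs _ _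
      _ ≤ ∑ j ∈ Finset.Ico 1 K, δ * (a + b) * norm2 (g j) := Finset.sum_le_sum hRO
      _ = δ * (a + b) * ρ := by rw [hρ, Finset.mul_sum]
  -- master inequality
  have hmaster : (1-δ) * N^2 ≤ Real.sqrt (1+δ) * N * (2*ε) + δ * (a+b) * ρ := by
    have h4 : -(δ * (a+b) * ρ)
        ≤ ∑ j ∈ Finset.Ico 1 K, ∑ t, A.mulVec h01 t * A.mulVec (g j) t :=
      neg_le_of_abs_le hROsum
    linarith [hlow, hinner, hCS, h4]
  have hmix : δ * (a+b) * ρ ≤ δ * (Real.sqrt 2 * N) * N := by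
    have e1 : (a+b) * ρ ≤ (Real.sqrt 2 * N) * ρ := mul_le_mul_of_nonneg_right habN hρ0
    have e2 : (Real.sqrt 2 * N) * ρ ≤ (Real.sqrt 2 * N) * N :=
      mul_le_mul_of_nonneg_left (hρa.trans haN)
        (mul_nonneg (Real.sqrt_nonneg _) hN0)
    nlinarith [e1, e2, hδ0]
  have hmaster2 : (1 - (Real.sqrt 2 + 1)*δ) * N^2 ≤ Real.sqrt (1+δ) * N * (2*ε) := by
    nlinarith [hmaster, hmix]
  -- conclusion
  have hd := denom_pos hδ0 hδ
  have h2N : 2*N ≤ C1 δ * ε := by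
    rcases eq_or_lt_of_le hN0 with hN00 | hNpos
    · rw [← hN00]; norm_num; exact hC1ε
    · rw [C1, div_mul_eq_mul_div, le_div_iff₀ (by linarith : (0:ℝ) < 1 - (Real.sqrt 2+1)*δ)]
      nlinarith [hmaster2, hNpos]
  have hfun : h = fun i => h01 i + ∑ j ∈ Finset.Ico 1 K, g j i := funext hdecomp
  have t1 : norm2 h ≤ N + ρ := by
    rw [hfun]
    calc norm2 (fun i => h01 i + ∑ j ∈ Finset.Ico 1 K, g j i)
        ≤ norm2 h01 + norm2 (fun i => ∑ j ∈ Finset.Ico 1 K, g j i) := norm2_add_le _ _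
      _ ≤ N + ρ := by
          have := norm2_sum_le (Finset.Ico 1 K) g
          rw [← hN, ← hρ] at *
          linarith [this]
  calc norm2 h ≤ N + ρ := t1
    _ ≤ 2*N := by linarith [hρa, haN]
    _ ≤ C1 δ * ε := h2N
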